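/- Let x, y, ε be real numbers with 0 < x < y < 2π, ε > 0, y − x − 2ε > 0 and y − x + 2ε < 2π. Let f : ℝ -> ℝ be differentiable with f(−ε) = 0, f(ε) = 2π, and f'(t) > 2 for all t ∈ [−ε, ε]. Then there exists a unique t₀ ∈ [−ε, ε] satisfying f(t₀) = y − x + 2t₀, and this t₀ lies in the open interval (−ε, ε). Moreover, setting θ₀ = x − t₀, the point (θ₀, t₀) is a fixed point of the map F : ℝ × [−ε, ε] -> ℝ², F(θ, t) = (x − t, θ + f(t) − y), it is the unique fixed point of F, and the Jacobian matrix of F at (θ₀, t₀), namely the 2×2 real matrix with rows (0, −1) and (1, f'(t₀)), has two distinct real eigenvalues, both positive. -/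

import Mathlib

open Polynomial

/-- Creation of a positive hyperbolic fixed point: with
`F (θ, t) = (x − t, θ + f t − y)`, there is a unique `t₀ ∈ [−ε, ε]` with
`f t₀ = y − x + 2 t₀`; it lies in `(−ε, ε)`, the point `(x − t₀, t₀)` is the unique
fixed point of `F` on `ℝ × [−ε, ε]`, and the Jacobian `!![0, −1; 1, f' t₀]` has two
distinct real eigenvalues, both positive. -/
theorem positive_hyperbolic_fixed_point
    (x y ε : ℝ) (hx : 0 < x) (hxy : x < y) (hy : y < 2 * Real.pi)
    (hε : 0 < ε) (h1 : y - x - 2 * ε > 0) (h2 : y - x + 2 * ε < 2 * Real.pi)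
    (f : ℝ → ℝ) (hf : Differentiable ℝ f)
    (hfneg : f (-ε) = 0) (hfpos : f ε = 2 * Real.pi)
    (hf' : ∀ t ∈ Set.Icc (-ε) ε, deriv f t > 2)
    (F : ℝ × ℝ → ℝ × ℝ) (hF : ∀ p : ℝ × ℝ, F p = (x - p.2, p.1 + f p.2 - y)) :
    ∃ t₀ ∈ Set.Icc (-ε) ε,
      f t₀ = y - x + 2 * t₀ ∧
      (∀ t ∈ Set.Icc (-ε) ε, f t = y - x + 2 * t → t = t₀) ∧
      t₀ ∈ Set.Ioo (-ε) ε ∧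
      F (x - t₀, t₀) = (x - t₀, t₀) ∧
      (∀ p : ℝ × ℝ, p.2 ∈ Set.Icc (-ε) ε → F p = p → p = (x - t₀, t₀)) ∧
      (∃ μ₁ μ₂ : ℝ, μ₁ ≠ μ₂ ∧ 0 < μ₁ ∧ 0 < μ₂ ∧
        Matrix.charpoly !![(0 : ℝ), -1; 1, deriv f t₀] = (X - C μ₁) * (X - C μ₂)) := by
  set g : ℝ → ℝ := fun t => f t - (y - x + 2 * t) with hg
  have hgdiff : Differentiable ℝ g := by
    apply hf.sub
    fun_prop
  have hgderiv : ∀ t, deriv g t = deriv f t - 2 := by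
    intro t
    have h2' : deriv (fun t : ℝ => y - x + 2 * t) t = 2 := by
      have : HasDerivAt (fun t : ℝ => y - x + 2 * t) 2 t := by
        simpa using ((hasDerivAt_id t).const_mul 2).const_add (y - x)
      exact this.deriv
    rw [hg, deriv_fun_sub (hf t) (by fun_prop), h2']
  have hmono : StrictMonoOn g (Set.Icc (-ε) ε) := by
    apply strictMonoOn_of_deriv_pos (convex_Icc _ _) hgdiff.continuous.continuousOn
    intro t ht
    rw [interior_Icc] at ht
    rw [hgderiv]
    have := hf' t (Set.mem_Icc_of_Ioo ht)
    linarith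
  have hgneg : g (-ε) < 0 := by simp [hg, hfneg]; linarith
  have hgpos : 0 < g ε := by simp [hg, hfpos]; linarith
  have hεε : -ε ≤ ε := by linarith
  have hivt := intermediate_value_Icc hεε hgdiff.continuous.continuousOn
  have h0mem : (0 : ℝ) ∈ Set.Icc (g (-ε)) (g ε) := ⟨hgneg.le, hgpos.le⟩
  obtain ⟨t₀, ht₀, hgt₀⟩ := hivt h0mem
  have hft₀ : f t₀ = y - x + 2 * t₀ := by
    have : f t₀ - (y - x + 2 * t₀) = 0 := hgt₀
    linarith
  have huniq : ∀ t ∈ Set.Icc (-ε) ε, f t = y - x + 2 * t → t = t₀ := by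
    intro t ht hft
    have hgt : g t = 0 := by simp [hg, hft]
    exact hmono.injOn ht ht₀ (by rw [hgt, hgt₀])
  have hne1 : t₀ ≠ -ε := by
    intro h; rw [h] at hgt₀; exact hgneg.ne hgt₀
  have hne2 : t₀ ≠ ε := by
    intro h; rw [h] at hgt₀; exact hgpos.ne' hgt₀
  have hIoo : t₀ ∈ Set.Ioo (-ε) ε :=
    ⟨lt_of_le_of_ne ht₀.1 (Ne.symm hne1), lt_of_le_of_ne ht₀.2 hne2⟩
  refine ⟨t₀, ht₀, hft₀, huniq, hIoo, ?_, ?_, ?_⟩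
  · rw [hF]
    refine Prod.ext rfl ?_
    show x - t₀ + f t₀ - y = t₀
    rw [hft₀]; ring
  · intro p hp hFp
    rw [hF] at hFp
    have h1' : x - p.2 = p.1 := congrArg Prod.fst hFp
    have h2' : p.1 + f p.2 - y = p.2 := congrArg Prod.snd hFp
    have hfp : f p.2 = y - x + 2 * p.2 := by linarith
    have := huniq p.2 hp hfp
    rw [Prod.ext_iff]
    exact ⟨by rw [← h1', this], this⟩
  · set d := deriv f t₀ with hd
    have hd2 : 2 < d := hf' t₀ ht₀
    set s := Real.sqrt (d ^ 2 - 4) with hs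
    have hdisc : 0 < d ^ 2 - 4 := by nlinarith
    have hs0 : 0 < s := Real.sqrt_pos.mpr hdisc
    have hssq : s ^ 2 = d ^ 2 - 4 := Real.sq_sqrt hdisc.le
    have hsd : s < d := by nlinarith
    refine ⟨(d - s) / 2, (d + s) / 2, ?_, by linarith, by linarith, ?_⟩
    · intro h; nlinarith [hs0]
    · have key : Matrix.charpoly !![(0 : ℝ), -1; 1, d] = X ^ 2 - C d * X + C 1 := by
        rw [Matrix.charpoly, Matrix.det_fin_two]
        simp [Matrix.charmatrix_apply]
        ring
      have hsum : (d - s) / 2 + (d + s) / 2 = d := by ring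
      have hprod : (d - s) / 2 * ((d + s) / 2) = 1 := by nlinarith
      rw [key, ← hsum, ← hprod, map_add, map_mul]
      ring
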